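/- Let A ∈ (0,1) be irrational. Then there exists a sequence {p_n/q_n} of even rational parameters converging to A such that for every n, p_n/q_n is the even predecessor of p_{n+1}/q_{n+1}. -/

import Mathlib

/-- An *even rational parameter* is a fraction `p/q` with `p, q` coprime positive
integers, `p < q`, and `p*q` even. -/
def EvenParam (p q : ℕ) : Prop :=
  Nat.Coprime p q ∧ 0 < p ∧ p < q ∧ Even (p * q)

/-- `τ` is the *tune* of `p/q`: `0 < 2τ < p+q` and `2pτ ≡ ±1 (mod p+q)`. -/
def IsTune (p q τ : ℕ) : Prop :=
  0 < 2 * τ ∧ 2 * τ < p + q ∧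
    (((p : ℤ) + q) ∣ 2 * p * τ - 1 ∨ ((p : ℤ) + q) ∣ 2 * p * τ + 1)

/-- `p'/q'` is the *even predecessor* of `p/q`. -/
def IsEvenPred (p q p' q' : ℕ) : Prop :=
  Nat.Coprime p' q' ∧ p' < q' ∧ Even (p' * q') ∧
    ((p : ℤ) * q' - (q : ℤ) * p').natAbs = 1 ∧ p' + q' < p + q

/-- `κ` is the unique nonnegative integer with `κ/(2κ+1) ≤ τ/(p+q) < (κ+1)/(2κ+3)`. -/
def IsKappa (p q τ κ : ℕ) : Prop :=
  κ * (p + q) ≤ (2 * κ + 1) * τ ∧ (2 * κ + 3) * τ < (κ + 1) * (p + q)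

private lemma parity_step (u v p q : ℕ)
    (hd : u * q = v * p + 1 ∨ v * p = u * q + 1)
    (hpq : Even (p * q)) (huv : ¬ Even (u * v)) :
    Even ((u + p) * (v + q)) := by
  rw [Nat.even_mul] at hpq huv ⊢
  push_neg at huv
  obtain ⟨hu, hv⟩ := huv
  have hne : ¬ (Even (u * q) ↔ Even (v * p)) := by
    rcases hd with h | h <;> rw [h, Nat.even_add_one] <;> tauto
  rw [Nat.even_mul, Nat.even_mul] at hne
  rw [Nat.even_add, Nat.even_add]
  tauto

private lemma parity_two (c d p q j : ℕ) (hpq : Even (p * q)) :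
    Even ((2 * c + (2 * j + 1) * p) * (2 * d + (2 * j + 1) * q)) := by
  rcases Nat.even_mul.mp hpq with h | h
  · exact Nat.even_mul.mpr (Or.inl (Even.add ⟨c, by ring⟩ (h.mul_left _)))
  · exact Nat.even_mul.mpr (Or.inr (Even.add ⟨d, by ring⟩ (h.mul_left _)))

private lemma irr_ne_div {A : ℝ} (h : Irrational A) (u v : ℕ) (hv : 0 < v) :
    A ≠ (u : ℝ) / v := by
  intro hA
  exact h ⟨(u : ℚ) / v, by push_cast; exact hA.symm⟩

private lemma copr (u v x y : ℕ) (h : u * y = v * x + 1) : Nat.Coprime u v := by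
  have d3 : Nat.gcd u v ∣ u * y - v * x :=
    Nat.dvd_sub ((Nat.gcd_dvd_left u v).mul_right _) ((Nat.gcd_dvd_right u v).mul_right _)
  rw [h, Nat.add_sub_cancel_left] at d3
  exact Nat.dvd_one.mp d3

structure SBNode (A : ℝ) where
  a : ℕ
  b : ℕ
  p : ℕ
  q : ℕ
  c : ℕ
  d : ℕ
  hp : p = a + c
  hq : q = b + d
  hdet : c * b = a * d + 1
  hab : a < b
  hcd : c ≤ d
  hd1 : 1 ≤ d
  hev : Even (p * q)
  hL : (a : ℝ) / b < A
  hR : A < (c : ℝ) / d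
  ntU : (p : ℝ) / q < A →
    Even ((p + c) * (q + d)) ∨ A < ((p : ℝ) + c) / ((q : ℝ) + d)
  ntD : A < (p : ℝ) / q →
    Even ((p + a) * (q + b)) ∨ ((p : ℝ) + a) / ((q : ℝ) + b) < A

set_option maxHeartbeats 1600000 in
private lemma step_node {A : ℝ} (hirr : Irrational A) (s : SBNode A) :
    ∃ t : SBNode A, IsEvenPred t.p t.q s.p s.q ∧ s.q < t.q := by
  classical
  obtain ⟨a, b, p, q, c, d, hp, hq, hdet, hab, hcd, hd1, hev, hL, hR, ntU, ntD⟩ := s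
  dsimp only
  have hb1 : 1 ≤ b := by omega
  have hc1 : 1 ≤ c := by
    rcases Nat.eq_zero_or_pos c with h | h
    · rw [h, Nat.zero_mul] at hdet
      exact absurd hdet.symm (Nat.succ_ne_zero _)
    · exact h
  have hpq : p < q := by omega
  have hp1 : 1 ≤ p := by omega
  have hq2 : 2 ≤ q := by omega
  have hq0R : (0:ℝ) < q := by exact_mod_cast (show 0 < q by omega)
  have hd0R : (0:ℝ) < d := by exact_mod_cast hd1
  have hb0R : (0:ℝ) < b := by exact_mod_cast hb1
  have hp0R : (0:ℝ) < p := by exact_mod_cast hp1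
  have hcq : c * q = d * p + 1 := by
    calc c * q = c * (b + d) := by rw [hq]
      _ = c * b + c * d := Nat.mul_add c b d
      _ = a * d + 1 + c * d := by rw [hdet]
      _ = d * (a + c) + 1 := by ring
      _ = d * p + 1 := by rw [hp]
  have hpb : p * b = q * a + 1 := by
    calc p * b = (a + c) * b := by rw [hp]
      _ = a * b + (a * d + 1) := by rw [Nat.add_mul, hdet]
      _ = (b + d) * a + 1 := by ring
      _ = q * a + 1 := by rw [hq]
  have hYdet : ∀ k : ℕ, (c + k * p) * q = (d + k * q) * p + 1 := by
    intro k
    calc (c + k * p) * q = c * q + k * (p * q) := by ring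
      _ = d * p + 1 + k * (p * q) := by rw [hcq]
      _ = (d + k * q) * p + 1 := by ring
  have hWdet : ∀ k : ℕ, p * (b + k * q) = q * (a + k * p) + 1 := by
    intro k
    calc p * (b + k * q) = p * b + k * (p * q) := by ring
      _ = q * a + 1 + k * (p * q) := by rw [hpb]
      _ = q * (a + k * p) + 1 := by ring
  have hcop : Nat.Coprime p q := copr p q a b hpb
  have hne : A ≠ (p : ℝ) / q := irr_ne_div hirr p q (by omega)
  rcases lt_or_gt_of_ne hne with hAx | hAx
  · -- DOWNWARD case : A < p/q
    have hAq : A * q < p := by rw [lt_div_iff₀ hq0R] at hAx; linarith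
    have haA : (a:ℝ) < A * b := by rw [div_lt_iff₀ hb0R] at hL; linarith
    have hA0 : 0 < A := by
      have : (0:ℝ) ≤ (a:ℝ) := by positivity
      nlinarith
    have hex : ∃ k : ℕ, A * ((b:ℝ) + k * q) < (a:ℝ) + k * p := by
      obtain ⟨k, hk⟩ := exists_nat_gt ((A * b - a) / ((p:ℝ) - A * q))
      have hpos : (0:ℝ) < (p:ℝ) - A * q := by linarith
      rw [div_lt_iff₀ hpos] at hk
      exact ⟨k, by nlinarith [hk]⟩
    obtain ⟨k0, hk0, hmin⟩ : ∃ k0 : ℕ, (A * ((b:ℝ) + k0 * q) < (a:ℝ) + k0 * p)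
        ∧ ∀ j : ℕ, j < k0 → ¬ (A * ((b:ℝ) + j * q) < (a:ℝ) + j * p) :=
      ⟨Nat.find hex, Nat.find_spec hex, fun j hj => Nat.find_min hex hj⟩
    have hk0pos : 1 ≤ k0 := by
      rcases Nat.eq_zero_or_pos k0 with h | h
      · exfalso; rw [h] at hk0; push_cast at hk0; linarith
      · exact h
    obtain ⟨j, hjlt, hEj, hdisj⟩ :
        ∃ j : ℕ, j < k0 ∧ Even ((a + (j+1) * p) * (b + (j+1) * q)) ∧
          ((A * ((b:ℝ) + ((j:ℝ)+1) * q) < (a:ℝ) + ((j:ℝ)+1) * p) ∨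
           (¬ (A * ((b:ℝ) + ((j:ℝ)+1) * q) < (a:ℝ) + ((j:ℝ)+1) * p) ∧
            (A * ((b:ℝ) + ((j:ℝ)+2) * q) < (a:ℝ) + ((j:ℝ)+2) * p))) := by
      by_cases hE : Even ((a + k0 * p) * (b + k0 * q))
      · refine ⟨k0 - 1, by omega, ?_, Or.inl ?_⟩
        · rw [show k0 - 1 + 1 = k0 by omega]; exact hE
        · have e : ((k0 - 1 : ℕ) : ℝ) + 1 = (k0 : ℝ) := by
            rw [Nat.cast_sub hk0pos]; norm_num
          rw [e]; exact hk0
      · have hk02 : 2 ≤ k0 := by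
          by_contra hcon
          have hk01 : k0 = 1 := by omega
          rcases ntD hAx with hEv | hIq
          · apply hE
            rw [hk01, show a + 1 * p = p + a by ring, show b + 1 * q = q + b by ring]
            exact hEv
          · rw [div_lt_iff₀ (add_pos hq0R hb0R)] at hIq
            rw [hk01] at hk0; push_cast at hk0
            linarith
        have hEp : Even ((a + (k0-1) * p) * (b + (k0-1) * q)) := by
          by_contra hodd
          apply hE
          have h2 := parity_step (a + (k0-1)*p) (b + (k0-1)*q) p q
            (Or.inr (by rw [mul_comm, mul_comm (a + (k0-1)*p) q]; exact hWdet (k0-1)))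
            hev hodd
          have e1 : a + (k0-1)*p + p = a + k0*p := by
            calc a + (k0-1)*p + p = a + ((k0-1)+1)*p := by ring
              _ = a + k0*p := by rw [show k0 - 1 + 1 = k0 by omega]
          have e2 : b + (k0-1)*q + q = b + k0*q := by
            calc b + (k0-1)*q + q = b + ((k0-1)+1)*q := by ring
              _ = b + k0*q := by rw [show k0 - 1 + 1 = k0 by omega]
          rwa [e1, e2] at h2
        have c1 : ((k0 - 1 : ℕ) : ℝ) = (k0:ℝ) - 1 := by
          rw [Nat.cast_sub hk0pos]; norm_num
        have c2 : ((k0 - 2 : ℕ) : ℝ) = (k0:ℝ) - 2 := by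
          rw [Nat.cast_sub hk02]; norm_num
        refine ⟨k0 - 2, by omega, ?_, Or.inr ⟨?_, ?_⟩⟩
        · rw [show k0 - 2 + 1 = k0 - 1 by omega]; exact hEp
        · rw [show ((k0-2:ℕ):ℝ) + 1 = ((k0-1:ℕ):ℝ) by rw [c1, c2]; ring]
          exact hmin (k0-1) (by omega)
        · rw [show ((k0-2:ℕ):ℝ) + 2 = ((k0:ℕ):ℝ) by rw [c2]; ring]
          exact hk0
    -- construct the new node
    have hq2pos : 0 < b + (j+1)*q := lt_of_lt_of_le (show 0 < b by omega) (Nat.le_add_right b _)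
    have hq2posR : (0:ℝ) < ((b + (j+1)*q : ℕ) : ℝ) := by exact_mod_cast hq2pos
    have hbjpos : 0 < b + j*q := lt_of_lt_of_le (show 0 < b by omega) (Nat.le_add_right b _)
    have hbjposR : (0:ℝ) < ((b + j*q : ℕ) : ℝ) := by exact_mod_cast hbjpos
    refine ⟨⟨a + j*p, b + j*q, a + (j+1)*p, b + (j+1)*q, p, q,
      by ring, by ring, by rw [hWdet j]; ring,
      add_lt_add_of_lt_of_le hab (Nat.mul_le_mul_left j (le_of_lt hpq)),
      le_of_lt hpq, by omega, hEj, ?_, hAx, ?_, ?_⟩, ?_, ?_⟩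
    · -- hL
      have hle' : ((a + j*p : ℕ):ℝ) ≤ A * ((b + j*q : ℕ):ℝ) := by
        push_cast
        linarith [not_lt.mp (hmin j hjlt)]
      exact lt_of_le_of_ne ((div_le_iff₀ hbjposR).mpr hle')
        (Ne.symm (irr_ne_div hirr _ _ hbjpos))
    · -- ntU
      intro hlt
      rcases hdisj with hQ | ⟨_, hQ2⟩
      · exfalso
        rw [div_lt_iff₀ hq2posR] at hlt
        push_cast at hlt
        linarith
      · right
        rw [lt_div_iff₀ (add_pos hq2posR hq0R)]
        push_cast
        linarith
    · -- ntD
      intro _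
      left
      rw [show a + (j+1)*p + (a + j*p) = 2*a + (2*j+1)*p by ring,
          show b + (j+1)*q + (b + j*q) = 2*b + (2*j+1)*q by ring]
      exact parity_two a b p q j hev
    · -- IsEvenPred
      refine ⟨hcop, hpq, hev, ?_, ?_⟩
      · have h := hWdet (j+1)
        have h' : ((p:ℤ)) * ((b + (j+1)*q : ℕ):ℤ) = (q:ℤ) * ((a + (j+1)*p : ℕ):ℤ) + 1 := by
          exact_mod_cast congrArg (fun n : ℕ => (n:ℤ)) h
        have hzz : ((a + (j+1)*p : ℕ) : ℤ) * (q:ℤ) - ((b + (j+1)*q : ℕ) : ℤ) * (p:ℤ) = -1 := by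
          linarith
        rw [hzz]
        rfl
      · have e1 : p ≤ (j+1)*p := Nat.le_mul_of_pos_left p (by omega)
        have e2 : q ≤ (j+1)*q := Nat.le_mul_of_pos_left q (by omega)
        have : 0 < a + j * p ∨ True := Or.inr trivial
        calc p + q < (a + (1*p + j*p)) + (b + (1*q + j*q)) := by omega
          _ = (a + (j+1)*p) + (b + (j+1)*q) := by ring
    · -- q growth
      have e2 : q ≤ (j+1)*q := Nat.le_mul_of_pos_left q (by omega)
      calc q < b + 1*q + j*q := by omega
        _ = b + (j+1)*q := by ring
  · -- UPWARD case : p/q < A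
    have hAq : (p:ℝ) < A * q := by rw [div_lt_iff₀ hq0R] at hAx; linarith
    have hcA : A * d < (c:ℝ) := by rw [lt_div_iff₀ hd0R] at hR; linarith
    have hA0 : 0 < A := by nlinarith
    have hex : ∃ k : ℕ, (c:ℝ) + k * p < A * ((d:ℝ) + k * q) := by
      obtain ⟨k, hk⟩ := exists_nat_gt (((c:ℝ) - A * d) / (A * q - (p:ℝ)))
      have hpos : (0:ℝ) < A * q - (p:ℝ) := by linarith
      rw [div_lt_iff₀ hpos] at hk
      exact ⟨k, by nlinarith [hk]⟩
    obtain ⟨k0, hk0, hmin⟩ : ∃ k0 : ℕ, ((c:ℝ) + k0 * p < A * ((d:ℝ) + k0 * q))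
        ∧ ∀ j : ℕ, j < k0 → ¬ ((c:ℝ) + j * p < A * ((d:ℝ) + j * q)) :=
      ⟨Nat.find hex, Nat.find_spec hex, fun j hj => Nat.find_min hex hj⟩
    have hk0pos : 1 ≤ k0 := by
      rcases Nat.eq_zero_or_pos k0 with h | h
      · exfalso; rw [h] at hk0; push_cast at hk0; linarith
      · exact h
    obtain ⟨j, hjlt, hEj, hdisj⟩ :
        ∃ j : ℕ, j < k0 ∧ Even ((c + (j+1) * p) * (d + (j+1) * q)) ∧
          (((c:ℝ) + ((j:ℝ)+1) * p < A * ((d:ℝ) + ((j:ℝ)+1) * q)) ∨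
           (¬ ((c:ℝ) + ((j:ℝ)+1) * p < A * ((d:ℝ) + ((j:ℝ)+1) * q)) ∧
            ((c:ℝ) + ((j:ℝ)+2) * p < A * ((d:ℝ) + ((j:ℝ)+2) * q)))) := by
      by_cases hE : Even ((c + k0 * p) * (d + k0 * q))
      · refine ⟨k0 - 1, by omega, ?_, Or.inl ?_⟩
        · rw [show k0 - 1 + 1 = k0 by omega]; exact hE
        · have e : ((k0 - 1 : ℕ) : ℝ) + 1 = (k0 : ℝ) := by
            rw [Nat.cast_sub hk0pos]; norm_num
          rw [e]; exact hk0
      · have hk02 : 2 ≤ k0 := by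
          by_contra hcon
          have hk01 : k0 = 1 := by omega
          rcases ntU hAx with hEv | hIq
          · apply hE
            rw [hk01, show c + 1 * p = p + c by ring, show d + 1 * q = q + d by ring]
            exact hEv
          · rw [lt_div_iff₀ (add_pos hq0R hd0R)] at hIq
            rw [hk01] at hk0; push_cast at hk0
            linarith
        have hEp : Even ((c + (k0-1) * p) * (d + (k0-1) * q)) := by
          by_contra hodd
          apply hE
          have h2 := parity_step (c + (k0-1)*p) (d + (k0-1)*q) p q
            (Or.inl (hYdet (k0-1))) hev hodd
          have e1 : c + (k0-1)*p + p = c + k0*p := by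
            calc c + (k0-1)*p + p = c + ((k0-1)+1)*p := by ring
              _ = c + k0*p := by rw [show k0 - 1 + 1 = k0 by omega]
          have e2 : d + (k0-1)*q + q = d + k0*q := by
            calc d + (k0-1)*q + q = d + ((k0-1)+1)*q := by ring
              _ = d + k0*q := by rw [show k0 - 1 + 1 = k0 by omega]
          rwa [e1, e2] at h2
        have c1 : ((k0 - 1 : ℕ) : ℝ) = (k0:ℝ) - 1 := by
          rw [Nat.cast_sub hk0pos]; norm_num
        have c2 : ((k0 - 2 : ℕ) : ℝ) = (k0:ℝ) - 2 := by
          rw [Nat.cast_sub hk02]; norm_num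
        refine ⟨k0 - 2, by omega, ?_, Or.inr ⟨?_, ?_⟩⟩
        · rw [show k0 - 2 + 1 = k0 - 1 by omega]; exact hEp
        · rw [show ((k0-2:ℕ):ℝ) + 1 = ((k0-1:ℕ):ℝ) by rw [c1, c2]; ring]
          exact hmin (k0-1) (by omega)
        · rw [show ((k0-2:ℕ):ℝ) + 2 = ((k0:ℕ):ℝ) by rw [c2]; ring]
          exact hk0
    have hq2pos : 0 < d + (j+1)*q := lt_of_lt_of_le (show 0 < d by omega) (Nat.le_add_right d _)
    have hq2posR : (0:ℝ) < ((d + (j+1)*q : ℕ) : ℝ) := by exact_mod_cast hq2pos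
    have hdjpos : 0 < d + j*q := lt_of_lt_of_le (show 0 < d by omega) (Nat.le_add_right d _)
    have hdjposR : (0:ℝ) < ((d + j*q : ℕ) : ℝ) := by exact_mod_cast hdjpos
    refine ⟨⟨p, q, c + (j+1)*p, d + (j+1)*q, c + j*p, d + j*q,
      by ring, by ring, by rw [hYdet j]; ring,
      hpq,
      add_le_add hcd (Nat.mul_le_mul_left j (le_of_lt hpq)),
      le_trans hd1 (Nat.le_add_right d _), hEj, hAx, ?_, ?_, ?_⟩, ?_, ?_⟩
    · -- hR : A < (c+jp)/(d+jq)
      have hle' : A * ((d + j*q : ℕ):ℝ) ≤ ((c + j*p : ℕ):ℝ) := by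
        push_cast
        linarith [not_lt.mp (hmin j hjlt)]
      have hAne : A ≠ ((c + j*p : ℕ):ℝ) / ((d + j*q : ℕ):ℝ) :=
        irr_ne_div hirr _ _ hdjpos
      rcases lt_or_eq_of_le ((le_div_iff₀ hdjposR).mpr hle') with h | h
      · exact h
      · exact absurd h hAne
    · -- ntU : first mediant even
      intro _
      left
      rw [show c + (j+1)*p + (c + j*p) = 2*c + (2*j+1)*p by ring,
          show d + (j+1)*q + (d + j*q) = 2*d + (2*j+1)*q by ring]
      exact parity_two c d p q j hev
    · -- ntD
      intro hlt
      rcases hdisj with hQ | ⟨_, hQ2⟩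
      · exfalso
        rw [lt_div_iff₀ hq2posR] at hlt
        push_cast at hlt
        linarith
      · right
        rw [div_lt_iff₀ (add_pos hq2posR hq0R)]
        push_cast
        linarith
    · -- IsEvenPred
      refine ⟨hcop, hpq, hev, ?_, ?_⟩
      · have h := hYdet (j+1)
        have h' : ((c + (j+1)*p : ℕ):ℤ) * (q:ℤ) = ((d + (j+1)*q : ℕ):ℤ) * (p:ℤ) + 1 := by
          exact_mod_cast congrArg (fun n : ℕ => (n:ℤ)) h
        have hzz : ((c + (j+1)*p : ℕ) : ℤ) * (q:ℤ) - ((d + (j+1)*q : ℕ) : ℤ) * (p:ℤ) = 1 := by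
          linarith
        rw [hzz]
        rfl
      · have e1 : p ≤ (j+1)*p := Nat.le_mul_of_pos_left p (by omega)
        have e2 : q ≤ (j+1)*q := Nat.le_mul_of_pos_left q (by omega)
        calc p + q < (c + (1*p + j*p)) + (d + (1*q + j*q)) := by omega
          _ = (c + (j+1)*p) + (d + (j+1)*q) := by ring
    · have e2 : q ≤ (j+1)*q := Nat.le_mul_of_pos_left q (by omega)
      calc q < d + 1*q + j*q := by omega
        _ = d + (j+1)*q := by ring

private lemma base_node {A : ℝ} (hA0 : 0 < A) (hA1 : A < 1) (hirr : Irrational A) :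
    ∃ s : SBNode A, 2 ≤ s.q := by
  have hA0' : (0 : ℝ) < 1 / A := by positivity
  have h1lt : 1 ≤ 1 / A := by
    rw [le_div_iff₀ hA0]; linarith
  set m : ℕ := ⌊1 / A⌋₊ with hm
  have hm1 : 1 ≤ m := Nat.le_floor (by exact_mod_cast h1lt)
  have hup : 1 / A < (m : ℝ) + 1 := Nat.lt_floor_add_one _
  have hlow : (m : ℝ) ≤ 1 / A := Nat.floor_le (le_of_lt hA0')
  have hlow' : (m : ℝ) < 1 / A := by
    rcases lt_or_eq_of_le hlow with h | h
    · exact h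
    · exfalso
      have hmpos : (0:ℝ) < m := by exact_mod_cast hm1
      have : A = 1 / (m : ℝ) := by
        field_simp at h ⊢
        nlinarith
      exact irr_ne_div hirr 1 m (by exact_mod_cast hm1) (by rw [this]; norm_num)
  -- A ∈ (1/(m+1), 1/m)
  have hAup : A < 1 / m := by
    have hmpos : (0:ℝ) < m := by exact_mod_cast hm1
    rw [lt_div_iff₀ hmpos]
    rw [lt_div_iff₀ hA0] at hlow'
    linarith
  have hAlow : 1 / ((m : ℝ) + 1) < A := by
    rw [div_lt_iff₀ (by positivity)]
    rw [div_lt_iff₀ hA0] at hup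
    linarith
  -- M := m if even else m+1
  obtain ⟨M, hMe, hM2, hMl, hMu⟩ :
      ∃ M : ℕ, Even M ∧ 2 ≤ M ∧ 1 / ((M : ℝ) + 1) < A ∧ A < 1 / ((M : ℝ) - 1) := by
    rcases Nat.even_or_odd m with he | ho
    · have hm2 : 2 ≤ m := by obtain ⟨t, ht⟩ := he; omega
      refine ⟨m, he, hm2, hAlow, ?_⟩
      have hm2' : (2:ℝ) ≤ m := by exact_mod_cast hm2
      calc A < 1 / m := hAup
        _ ≤ 1 / ((m:ℝ) - 1) := by
          apply one_div_le_one_div_of_le <;> linarith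
    · refine ⟨m + 1, Nat.even_add_one.mpr (by simpa [Nat.not_even_iff_odd]), by omega, ?_, ?_⟩
      · have hm1' : (1:ℝ) ≤ m := by exact_mod_cast hm1
        push_cast
        calc 1 / ((m:ℝ) + 1 + 1) < 1 / ((m:ℝ) + 1) := by
              apply one_div_lt_one_div_of_lt <;> linarith
          _ < A := hAlow
      · push_cast
        simpa using hAup
  have hM1R : (1:ℝ) ≤ (M:ℝ) - 1 := by
    have : (2:ℝ) ≤ M := by exact_mod_cast hM2
    linarith
  refine ⟨⟨0, 1, 1, M, 1, M - 1, rfl, by omega, by simp, by omega, by omega, by omega,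
    ?_, ?_, ?_, ?_, ?_⟩, ?_⟩
  · -- Even (1 * M)
    simpa using hMe
  · -- 0/1 < A
    simpa using hA0
  · -- A < 1/(M-1)
    have : ((M - 1 : ℕ) : ℝ) = (M : ℝ) - 1 := by
      have : 1 ≤ M := by omega
      push_cast [this]
      ring
    rw [this]
    simpa using hMu
  · -- ntU : even branch
    intro _
    left
    have : (1 + 1) * (M + (M - 1)) = 2 * (M + (M-1)) := by ring
    exact ⟨(M + (M-1)), by omega⟩
  · -- ntD : inequality branch
    intro _
    right
    push_cast
    calc (1 + 0 : ℝ) / ((M:ℝ) + 1) = 1 / ((M:ℝ)+1) := by norm_num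
      _ < A := hMl
  · simp
    omega

set_option maxHeartbeats 800000 in
private lemma node_bound {A : ℝ} (s : SBNode A) :
    |(s.p : ℝ) / s.q - A| ≤ 2 / s.q := by
  obtain ⟨a, b, p, q, c, d, hp, hq, hdet, hab, hcd, hd1, hev, hL, hR, ntU, ntD⟩ := s
  dsimp only
  have hb1 : 1 ≤ b := by omega
  have hb0R : (0:ℝ) < b := by exact_mod_cast hb1
  have hd0R : (0:ℝ) < d := by exact_mod_cast hd1
  have hq0R : (0:ℝ) < q := by
    exact_mod_cast (show 0 < q by omega)
  have hdetR : (c:ℝ) * b = (a:ℝ) * d + 1 := by exact_mod_cast hdet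
  have hpR : (p:ℝ) = a + c := by exact_mod_cast hp
  have hqR : (q:ℝ) = b + d := by exact_mod_cast hq
  have hb1R : (1:ℝ) ≤ b := by exact_mod_cast hb1
  have hd1R : (1:ℝ) ≤ d := by exact_mod_cast hd1
  have h6 : (a:ℝ)/b ≤ (p:ℝ)/q := by
    rw [div_le_div_iff₀ hb0R hq0R, hpR, hqR]
    nlinarith [hdetR]
  have h7 : (p:ℝ)/q ≤ (c:ℝ)/d := by
    rw [div_le_div_iff₀ hq0R hd0R, hpR, hqR]
    nlinarith [hdetR]
  have h8 : (c:ℝ)/d - (a:ℝ)/b ≤ 2/(q:ℝ) := by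
    have hnum : (c:ℝ)*(b:ℝ) - (d:ℝ)*(a:ℝ) = 1 := by linarith [hdetR]
    rw [div_sub_div _ _ hd0R.ne' hb0R.ne', div_le_div_iff₀ (by positivity) hq0R, hnum]
    nlinarith [hqR, hb1R, hd1R, mul_nonneg (sub_nonneg.mpr hb1R) (sub_nonneg.mpr hd1R)]
  rw [abs_le]
  constructor
  · linarith [hR, h6, h8]
  · linarith [hL, h7, h8]

theorem exists_evenPred_sequence (A : ℝ) (hA0 : 0 < A) (hA1 : A < 1)
    (hirr : Irrational A) :
    ∃ p q : ℕ → ℕ, (∀ n, EvenParam (p n) (q n)) ∧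
      (∀ n, IsEvenPred (p (n + 1)) (q (n + 1)) (p n) (q n)) ∧
      Filter.Tendsto (fun n => (p n : ℝ) / (q n : ℝ)) Filter.atTop (nhds A) := by
  classical
  obtain ⟨s0, hs0⟩ := base_node hA0 hA1 hirr
  choose nxt h1 h2 using step_node hirr
  let f : ℕ → SBNode A := fun n => Nat.rec s0 (fun _ s => nxt s) n
  have hEP : ∀ s : SBNode A, EvenParam s.p s.q := by
    intro s
    obtain ⟨a, b, p, q, c, d, hp, hq, hdet, hab, hcd, hd1, hev, hL, hR, ntU, ntD⟩ := s
    dsimp only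
    have hc1 : 1 ≤ c := by
      rcases Nat.eq_zero_or_pos c with h | h
      · rw [h, Nat.zero_mul] at hdet
        exact absurd hdet.symm (Nat.succ_ne_zero _)
      · exact h
    have hpb : p * b = q * a + 1 := by
      calc p * b = (a + c) * b := by rw [hp]
        _ = a * b + (a * d + 1) := by rw [Nat.add_mul, hdet]
        _ = (b + d) * a + 1 := by ring
        _ = q * a + 1 := by rw [hq]
    exact ⟨copr p q a b hpb, by omega, by omega, hev⟩
  refine ⟨fun n => (f n).p, fun n => (f n).q, fun n => hEP (f n), fun n => h1 (f n), ?_⟩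
  have hqn : ∀ n, n + 2 ≤ (f n).q := by
    intro n
    induction n with
    | zero => exact hs0
    | succ k ih =>
      have h3 : (f k).q < (f (k+1)).q := h2 (f k)
      omega
  have hbound : ∀ n : ℕ, |((f n).p : ℝ) / ((f n).q : ℝ) - A| ≤ 2 / ((n:ℝ) + 1) := by
    intro n
    refine le_trans (node_bound (f n)) ?_
    have h4 : ((n:ℝ) + 1) ≤ ((f n).q : ℝ) := by
      have := hqn n
      have : ((n + 2 : ℕ) : ℝ) ≤ ((f n).q : ℝ) := by exact_mod_cast this
      push_cast at this
      linarith
    exact div_le_div_of_nonneg_left (by norm_num) (by positivity) h4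
  have h0 : Filter.Tendsto (fun n : ℕ => 2 / ((n:ℝ) + 1)) Filter.atTop (nhds 0) := by
    have := tendsto_one_div_add_atTop_nhds_zero_nat.const_mul (2:ℝ)
    simpa [mul_one_div, div_eq_mul_inv] using this
  have habs : Filter.Tendsto (fun n => |((f n).p : ℝ) / ((f n).q : ℝ) - A|)
      Filter.atTop (nhds 0) :=
    squeeze_zero (fun n => abs_nonneg _) hbound h0
  rw [tendsto_iff_dist_tendsto_zero]
  simpa [Real.dist_eq] using habs
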